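/- Let V be a finite-dimensional real vector space and f : V → V a linear automorphism of finite order, i.e. f^n = id for some integer n ≥ 1. Then det(f) = (−1)^(dim V − dim V^f), where V^f = {v ∈ V : f(v) = v} is the fixed subspace of f. -/

import Mathlib

open Polynomial Module

lemma aux_abs_one {w : ℂ} {n : ℕ} (hn : 1 ≤ n) (h : w ^ n = 1) : ‖w‖ = 1 := by
  have h1 : ‖w‖ ^ n = 1 := by rw [← norm_pow, h, norm_one]
  have h0 : 0 ≤ ‖w‖ := norm_nonneg w
  rcases lt_trichotomy (‖w‖) 1 with h2 | h2 | h2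
  · exfalso; have := pow_lt_one₀ h0 h2 (by omega : n ≠ 0); rw [h1] at this; exact lt_irrefl _ this
  · exact h2
  · exfalso; have := one_lt_pow₀ h2 (by omega : n ≠ 0); rw [h1] at this; exact lt_irrefl _ this

lemma aux_multiset (n : ℕ) (hn : 1 ≤ n) :
    ∀ s : Multiset ℂ, s.map (starRingEnd ℂ) = s → (∀ w ∈ s, w ^ n = 1) →
      s.prod = (-1) ^ (Multiset.card s - s.count 1) := by
  intro s
  induction s using Multiset.strongInductionOn with
  | ih s IH =>
  intro hconj hroot
  rcases s.empty_or_exists_mem with rfl | ⟨w, hw⟩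
  · simp
  by_cases hw1 : w = 1
  · subst hw1
    obtain ⟨t, rfl⟩ := Multiset.exists_cons_of_mem hw
    have ht : t.map (starRingEnd ℂ) = t := by
      have h := hconj
      simp only [Multiset.map_cons, map_one] at h
      exact (Multiset.cons_inj_right _).mp h
    have hIH := IH t (Multiset.lt_cons_self t 1) ht (fun u hu => hroot u (Multiset.mem_cons_of_mem hu))
    have hc : Multiset.card (1 ::ₘ t) - (1 ::ₘ t).count 1 = Multiset.card t - t.count 1 := by
      simp [Multiset.count_cons_self, Nat.succ_sub_succ]
    simp [hIH, hc]
  by_cases hwreal : (starRingEnd ℂ) w = w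
  · -- w real, w ≠ 1, w root of unity ⟹ w = -1
    have habs : ‖w‖ = 1 := aux_abs_one hn (hroot w hw)
    have hwre : (w.re : ℂ) = w := by
      rw [Complex.conj_eq_iff_re] at hwreal; exact hwreal
    have habs' : |w.re| = 1 := by
      rw [← Real.norm_eq_abs, ← Complex.norm_real, hwre, habs]
    have hxm : w = -1 := by
      rcases abs_eq (by norm_num : (0:ℝ) ≤ 1) |>.mp habs' with h | h
      · exfalso; apply hw1; rw [← hwre, h]; norm_num
      · rw [← hwre, h]; norm_num
    obtain ⟨t, rfl⟩ := Multiset.exists_cons_of_mem hw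
    rw [hxm] at hconj hroot hw ⊢
    have ht : t.map (starRingEnd ℂ) = t := by
      have h := hconj
      simp only [Multiset.map_cons, map_neg, map_one] at h
      exact (Multiset.cons_inj_right _).mp h
    have hIH := IH t (by rw [hxm]; exact Multiset.lt_cons_self t _) ht
      (fun u hu => hroot u (Multiset.mem_cons_of_mem hu))
    have hcle : t.count 1 ≤ Multiset.card t := Multiset.count_le_card _ _
    rw [Multiset.prod_cons, hIH, Multiset.card_cons,
      Multiset.count_cons_of_ne (by norm_num : (1 : ℂ) ≠ -1), Nat.succ_sub hcle, pow_succ]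
    ring
  · -- w nonreal: pair with conjugate
    set cw := (starRingEnd ℂ) w with hcwdef
    have hcw : cw ∈ s := by rw [← hconj]; exact Multiset.mem_map_of_mem _ hw
    have hcw' : cw ∈ s.erase w := (Multiset.mem_erase_of_ne hwreal).mpr hcw
    set t := (s.erase w).erase cw with htdef
    have hs : s = w ::ₘ cw ::ₘ t := by
      rw [htdef, Multiset.cons_erase hcw', Multiset.cons_erase hw]
    have ht : t.map (starRingEnd ℂ) = t := by
      have h := hconj
      rw [hs] at h
      simp only [Multiset.map_cons] at h
      rw [← hcwdef, Complex.conj_conj] at h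
      rw [Multiset.cons_swap] at h
      exact (Multiset.cons_inj_right _).mp ((Multiset.cons_inj_right _).mp h)
    have htlt : t < s := by
      rw [hs]
      exact (Multiset.lt_cons_self t cw).trans (Multiset.lt_cons_self _ w)
    have hIH := IH t htlt ht (fun u hu => hroot u (by
      rw [hs]; exact Multiset.mem_cons_of_mem (Multiset.mem_cons_of_mem hu)))
    have hwcw : w * cw = 1 := by
      rw [hcwdef, Complex.mul_conj, Complex.normSq_eq_norm_sq, aux_abs_one hn (hroot w hw)]
      norm_num
    have hcw1 : cw ≠ 1 := by
      intro h
      apply hw1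
      have : w = (starRingEnd ℂ) cw := by rw [hcwdef, Complex.conj_conj]
      rw [this, h, map_one]
    have hcle : t.count 1 ≤ Multiset.card t := Multiset.count_le_card _ _
    rw [hs, Multiset.prod_cons, Multiset.prod_cons, ← mul_assoc, hwcw, one_mul, hIH,
      Multiset.card_cons, Multiset.card_cons,
      Multiset.count_cons_of_ne (Ne.symm hw1), Multiset.count_cons_of_ne (Ne.symm hcw1)]
    have : Multiset.card t + 1 + 1 - t.count 1 = (Multiset.card t - t.count 1) + 2 := by omega
    rw [this, pow_add]
    norm_num



-- aux: eval of charpoly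
lemma aux_eval_charpoly {m R : Type*} [CommRing R] [Fintype m] [DecidableEq m]
    (A : Matrix m m R) (r : R) :
    A.charpoly.eval r = (r • (1 : Matrix m m R) - A).det := by
  rw [Matrix.charpoly]
  have h := RingHom.map_det (Polynomial.evalRingHom r) (Matrix.charmatrix A)
  simp only [coe_evalRingHom] at h
  rw [h]
  congr 1
  ext i j
  by_cases hij : i = j
  · subst hij; simp [Matrix.charmatrix_apply, Matrix.one_apply, Matrix.smul_apply]
  · simp [Matrix.charmatrix_apply, Matrix.one_apply, hij, Matrix.smul_apply,
      Matrix.diagonal_apply_ne _ hij]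

lemma aux_ntd_map {p : ℝ[X]} :
    (p.map (algebraMap ℝ ℂ)).natTrailingDegree = p.natTrailingDegree := by
  have hs : (p.map (algebraMap ℝ ℂ)).support = p.support := by
    ext i
    simp [Polynomial.mem_support_iff, Polynomial.coeff_map,
      map_eq_zero_iff (algebraMap ℝ ℂ) (algebraMap ℝ ℂ).injective]
  unfold Polynomial.natTrailingDegree Polynomial.trailingDegree
  rw [hs]

lemma aux_ker_ntd {V : Type*} [AddCommGroup V] [Module ℝ V] [FiniteDimensional ℝ V]
    (f : V ≃ₗ[ℝ] V) (n : ℕ) (hn : 1 ≤ n) (hf : f ^ n = 1) :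
    Module.finrank ℝ (LinearMap.ker (f.toLinearMap - LinearMap.id)) =
      (f.toLinearMap - LinearMap.id : Module.End ℝ V).charpoly.natTrailingDegree  := by
  set φ : Module.End ℝ V := f.toLinearMap - LinearMap.id with hφ
  have hcoe : ∀ m : ℕ, ((f ^ m : V ≃ₗ[ℝ] V) : V →ₗ[ℝ] V) = (f : V →ₗ[ℝ] V) ^ m := by
    intro m
    induction m with
    | zero => rfl
    | succ k ih => rw [pow_succ, pow_succ, ← ih]; rfl
  have hfpow : (f.toLinearMap : Module.End ℝ V) ^ n = 1 := by
    rw [← hcoe, hf]; rfl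
  have hker2 : ∀ v : V, φ (φ v) = 0 → φ v = 0 := by
    intro v hv
    set w := φ v with hwdef
    have hfw : f.toLinearMap w = w := by
      have h : φ w = 0 := hv
      rw [hφ] at h
      simpa [sub_eq_zero] using h
    have hfv : f.toLinearMap v = v + w := by
      have h : φ v = w := rfl
      rw [hφ] at h
      simp only [LinearMap.sub_apply, LinearMap.id_apply] at h
      linear_combination (norm := abel) h
    have hfww : ∀ j : ℕ, (f.toLinearMap ^ j) w = w := by
      intro j
      induction j with
      | zero => simp
      | succ m ih => rw [pow_succ', Module.End.mul_apply, ih, hfw]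
    have hiter : ∀ j : ℕ, (f.toLinearMap ^ j) v = v + j • w := by
      intro j
      induction j with
      | zero => simp
      | succ m ih =>
        rw [pow_succ, Module.End.mul_apply, hfv, map_add, ih, hfww, succ_nsmul]
        abel
    have h := hiter n
    rw [hfpow] at h
    simp only [Module.End.one_apply] at h
    have h0 : n • w = 0 := by
      have h' := h.symm
      rwa [add_eq_left] at h'
    have hnw : (n : ℝ) • w = 0 := by rwa [← Nat.cast_smul_eq_nsmul ℝ] at h0
    rcases smul_eq_zero.mp hnw with h | h
    · exact absurd h (by exact_mod_cast (by omega : n ≠ 0))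
    · exact h
  have hkerpow : ∀ m : ℕ, ∀ v : V, (φ ^ (m + 1)) v = 0 → φ v = 0 := by
    intro m
    induction m with
    | zero => intro v hv; simpa using hv
    | succ m ih =>
      intro v hv
      apply ih
      have e2 : (φ ^ (m + 1)) v = φ ((φ ^ m) v) := by
        rw [pow_succ', Module.End.mul_apply]
      have e1 : (φ ^ (m + 2)) v = φ (φ ((φ ^ m) v)) := by
        rw [pow_succ', Module.End.mul_apply, pow_succ', Module.End.mul_apply]
      rw [e2]
      exact hker2 _ (e1 ▸ hv)
  have hmax : φ.maxGenEigenspace 0 = LinearMap.ker φ := by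
    ext x
    simp only [Module.End.mem_maxGenEigenspace, zero_smul, sub_zero, LinearMap.mem_ker]
    constructor
    · rintro ⟨k, hk⟩
      rcases k with _ | m
      · simp only [pow_zero, Module.End.one_apply] at hk
        rw [hk]; simp
      · exact hkerpow m x hk
    · intro hx
      exact ⟨1, by simpa using hx⟩
  rw [← LinearMap.finrank_maxGenEigenspace_zero_eq, hmax]

/-- If `f` is a finite-order linear automorphism of a finite-dimensional real vector
space `V`, then `det f = (-1)^(dim V - dim V^f)`, where `V^f = ker (f - id)` is the
fixed subspace of `f`. -/
theorem det_eq_neg_one_pow_of_finite_order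
    {V : Type*} [AddCommGroup V] [Module ℝ V] [FiniteDimensional ℝ V]
    (f : V ≃ₗ[ℝ] V) (n : ℕ) (hn : 1 ≤ n) (hf : f ^ n = 1) :
    LinearMap.det (f.toLinearMap) =
      (-1 : ℝ) ^ (Module.finrank ℝ V -
        Module.finrank ℝ (LinearMap.ker (f.toLinearMap - LinearMap.id))) := by
  classical
  set d := Module.finrank ℝ V with hd
  set φ : Module.End ℝ V := f.toLinearMap - LinearMap.id with hφ
  set k := Module.finrank ℝ (LinearMap.ker φ) with hk
  let b := Module.finBasis ℝ V
  set M : Matrix (Fin d) (Fin d) ℝ := LinearMap.toMatrix b b f.toLinearMap with hM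
  set N : Matrix (Fin d) (Fin d) ℝ := LinearMap.toMatrix b b φ with hN
  have hNM : N = M - 1 := by
    rw [hN, hM, hφ, map_sub, LinearMap.toMatrix_id]
  have hMn : M ^ n = 1 := by
    have hcoe : ∀ m : ℕ, ((f ^ m : V ≃ₗ[ℝ] V) : V →ₗ[ℝ] V) = (f : V →ₗ[ℝ] V) ^ m := by
      intro m
      induction m with
      | zero => rfl
      | succ j ih => rw [pow_succ, pow_succ, ← ih]; rfl
    have h1 : (f.toLinearMap : Module.End ℝ V) ^ n = 1 := by
      rw [← hcoe, hf]; rfl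
    rw [hM, LinearMap.toMatrix_pow, h1, LinearMap.toMatrix_one]
  -- characteristic polynomial of φ
  set χ : ℝ[X] := φ.charpoly with hχ
  have hχN : N.charpoly = χ := LinearMap.charpoly_toMatrix φ b
  set χc : ℂ[X] := χ.map (algebraMap ℝ ℂ) with hχc
  set Nc : Matrix (Fin d) (Fin d) ℂ := N.map (algebraMap ℝ ℂ) with hNc
  set Mc : Matrix (Fin d) (Fin d) ℂ := M.map (algebraMap ℝ ℂ) with hMc
  have hNcMc : Nc = Mc - 1 := by
    have h1 : Nc = (algebraMap ℝ ℂ).mapMatrix N := rfl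
    have h2 : Mc = (algebraMap ℝ ℂ).mapMatrix M := rfl
    rw [h1, h2, hNM, map_sub, map_one]
  have hMcn : Mc ^ n = 1 := by
    have : Mc = (algebraMap ℝ ℂ).mapMatrix M := rfl
    rw [this, ← map_pow, hMn, map_one]
  have hχcNc : Nc.charpoly = χc := by rw [hNc, Matrix.charpoly_map, hχN]
  have hmonic : χc.Monic := (φ.charpoly_monic).map _
  have hdeg : χc.natDegree = d := by
    rw [hχc, hχ, (φ.charpoly_monic).natDegree_map, φ.charpoly_natDegree]
  -- roots
  set μ : Multiset ℂ := χc.roots with hμ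
  have hsplits : χc.Splits := IsAlgClosed.splits χc
  have hcard : Multiset.card μ = d := by
    rw [hμ, (Polynomial.splits_iff_card_roots).mp hsplits, hdeg]
  have hprodform : χc = (μ.map fun z => X - C z).prod :=
    hsplits.eq_prod_roots_of_monic hmonic
  -- evaluation at -1
  have heval : χc.eval (-1) = (μ.map fun z => -1 - z).prod := by
    conv_lhs => rw [hprodform]
    rw [Polynomial.eval_multiset_prod, Multiset.map_map]
    congr 1
    apply Multiset.map_congr rfl
    intro z hz
    simp
  have heval2 : χc.eval (-1) = (-1 : ℂ) ^ d * (algebraMap ℝ ℂ) (LinearMap.det f.toLinearMap) := by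
    rw [← hχcNc, aux_eval_charpoly]
    have h1 : (-1 : ℂ) • (1 : Matrix (Fin d) (Fin d) ℂ) - Nc = -(Mc) := by
      rw [hNcMc]; ext i j; simp [Matrix.one_apply]; ring
    rw [h1, Matrix.det_neg, Fintype.card_fin]
    congr 1
    rw [hMc, show (M.map ⇑(algebraMap ℝ ℂ)) = (algebraMap ℝ ℂ).mapMatrix M from rfl,
      ← RingHom.map_det]
    congr 1
    rw [hM, LinearMap.det_toMatrix]
  -- the multiset of eigenvalues of f
  set ρ : Multiset ℂ := μ.map (fun z => 1 + z) with hρ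
  have hcardρ : Multiset.card ρ = d := by rw [hρ, Multiset.card_map, hcard]
  -- det f = prod of ρ
  have hdetρ : (algebraMap ℝ ℂ) (LinearMap.det f.toLinearMap) = ρ.prod := by
    have e1 : (μ.map fun z => -1 - z).prod = (-1 : ℂ) ^ d * ρ.prod := by
      have : (μ.map fun z => -1 - z) = (μ.map fun z => (-1) * (1 + z)) := by
        apply Multiset.map_congr rfl; intro z hz; ring
      rw [this, hρ]
      rw [show (fun z : ℂ => (-1) * (1 + z)) = fun z => (fun _ => (-1 : ℂ)) z * (fun z => 1 + z) z
        from rfl, Multiset.prod_map_mul]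
      congr 1
      rw [Multiset.map_const', Multiset.prod_replicate, hcard]
    have hcancel : ((-1 : ℂ)) ^ d ≠ 0 := pow_ne_zero _ (by norm_num)
    refine mul_left_cancel₀ hcancel ?_
    rw [← heval2, heval, e1]
  -- conjugation closure of roots
  have hμconj : μ.map (starRingEnd ℂ) = μ := by
    have hmapχ : χc.map (starRingEnd ℂ) = χc := by
      rw [hχc, Polynomial.map_map]
      congr 1
      ext x
      simp [Complex.conj_ofReal]
    have h := hsplits.roots_map (starRingEnd ℂ)
    rw [hmapχ] at h
    exact h.symm
  have hρconj : ρ.map (starRingEnd ℂ) = ρ := by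
    rw [hρ, Multiset.map_map]
    have hcomm : (starRingEnd ℂ) ∘ (fun z => 1 + z) = (fun z => 1 + z) ∘ (starRingEnd ℂ) := by
      ext z; simp [map_add]
    rw [hcomm, ← Multiset.map_map, hμconj]
  -- elements of ρ are n-th roots of unity
  have hρroot : ∀ w ∈ ρ, w ^ n = 1 := by
    intro w hw
    rw [hρ] at hw
    obtain ⟨z, hz, rfl⟩ := Multiset.mem_map.mp hw
    have hzroot : (Nc.charpoly).IsRoot z := by
      rw [hχcNc]; exact Polynomial.isRoot_of_mem_roots hz
    have hdet0 : (z • (1 : Matrix (Fin d) (Fin d) ℂ) - Nc).det = 0 := by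
      rw [← aux_eval_charpoly]; exact hzroot
    obtain ⟨v, hv0, hv⟩ := (Matrix.exists_mulVec_eq_zero_iff).mpr hdet0
    have hNv : Nc.mulVec v = z • v := by
      rw [Matrix.sub_mulVec, Matrix.smul_mulVec, Matrix.one_mulVec, sub_eq_zero] at hv
      exact hv.symm
    have hMv : Mc.mulVec v = (1 + z) • v := by
      rw [hNcMc, Matrix.sub_mulVec, Matrix.one_mulVec] at hNv
      have h := eq_add_of_sub_eq hNv
      rw [h, add_smul, one_smul]
      abel
    have hpow : ∀ j : ℕ, (Mc ^ j).mulVec v = ((1 + z) ^ j) • v := by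
      intro j
      induction j with
      | zero => simp [Matrix.one_mulVec]
      | succ m ih =>
        rw [pow_succ, ← Matrix.mulVec_mulVec, hMv, Matrix.mulVec_smul, ih, pow_succ]
        rw [smul_smul, mul_comm]
    have hfix := hpow n
    rw [hMcn, Matrix.one_mulVec] at hfix
    obtain ⟨i, hi⟩ := Function.ne_iff.mp hv0
    have heq : ((1 + z) ^ n) * v i = 1 * v i := by
      have h := congrFun hfix.symm i
      simpa [Pi.smul_apply, smul_eq_mul] using h
    exact mul_right_cancel₀ hi heq
  -- count of the root 1 in ρ
  have hkχ : k = χ.natTrailingDegree := by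
    rw [hk, hχ, hφ]
    exact aux_ker_ntd f n hn hf
  have hcount : ρ.count 1 = k := by
    have h1 : ρ.count 1 = μ.count 0 := by
      have := Multiset.count_map_eq_count' (fun z : ℂ => 1 + z) μ
        (fun a b hab => by simpa using hab) 0
      simpa using this
    have h2 : μ.count 0 = χc.rootMultiplicity 0 := by rw [hμ, Polynomial.count_roots]
    rw [h1, h2, Polynomial.rootMultiplicity_eq_natTrailingDegree', hχc, aux_ntd_map, ← hkχ]
  -- conclude
  have hmain := aux_multiset n hn ρ hρconj hρroot
  rw [hcardρ, hcount] at hmain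
  have hfinal : (algebraMap ℝ ℂ) (LinearMap.det f.toLinearMap)
      = (algebraMap ℝ ℂ) ((-1 : ℝ) ^ (d - k)) := by
    rw [hdetρ, hmain, map_pow, map_neg, map_one]
  exact_mod_cast (algebraMap ℝ ℂ).injective hfinal
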